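/- Every GL(d,ℝ)-equivariant linear map Φ : (ℝ^d)^{⊗n} → (ℝ^d)^{⊗n} is a linear combination of the permutation maps δ(σ) : v₁⊗⋯⊗v_n ↦ v_{σ(1)}⊗⋯⊗v_{σ(n)}, σ ∈ S_n; moreover if d ≥ n the maps {δ(σ) : σ ∈ S_n} are linearly independent. -/

import Mathlib

open Matrix
open scoped TensorProduct

namespace InvTensor
variable {d n : ℕ}

abbrev T (d n : ℕ) := ⨂[ℝ] _ : Fin n, (Fin d → ℝ)

noncomputable def P (d : ℕ) (σ : Equiv.Perm (Fin n)) : T d n →ₗ[ℝ] T d n :=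
  PiTensorProduct.lift ((PiTensorProduct.tprod ℝ (s := fun _ : Fin n => Fin d → ℝ)).domDomCongr σ)

@[simp] lemma P_tprod (σ : Equiv.Perm (Fin n)) (v : Fin n → (Fin d → ℝ)) :
    P d σ (PiTensorProduct.tprod ℝ v) = PiTensorProduct.tprod ℝ (fun i => v (σ i)) := by
  simp [P, PiTensorProduct.lift.tprod, MultilinearMap.domDomCongr_apply]

noncomputable def cf (f : Fin n → Fin d) : T d n →ₗ[ℝ] ℝ :=
  PiTensorProduct.lift ((MultilinearMap.mkPiAlgebra ℝ (Fin n) ℝ).compLinearMap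
      (fun i => LinearMap.proj (f i)))

@[simp] lemma cf_tprod (f : Fin n → Fin d) (v : Fin n → (Fin d → ℝ)) :
    cf f (PiTensorProduct.tprod ℝ v) = ∏ i, v i (f i) := by
  simp [cf, PiTensorProduct.lift.tprod]

noncomputable def bv (d : ℕ) (f : Fin n → Fin d) : T d n :=
  PiTensorProduct.tprod ℝ (fun i => Pi.single (f i) 1)

lemma single_eq_smul (j : Fin d) (c : ℝ) :
    Pi.single j c = c • (Pi.single j (1:ℝ) : Fin d → ℝ) := by
  funext x; simp [Pi.single_apply, mul_ite]

lemma cf_bv (f g : Fin n → Fin d) : cf f (bv d g) = if g = f then 1 else 0 := by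
  classical
  simp only [bv, cf_tprod, Pi.single_apply]
  rw [Finset.prod_boole]
  congr 1
  simp only [Finset.mem_univ, true_implies, funext_iff, eq_iff_iff]
  exact ⟨fun h => fun i => (h i).symm, fun h i => (h i).symm⟩

lemma tprod_eq_sum (v : Fin n → (Fin d → ℝ)) :
    PiTensorProduct.tprod ℝ v = ∑ f : Fin n → Fin d, (∏ i, v i (f i)) • bv d f := by
  classical
  have h1 : v = fun i => ∑ j, v i j • (Pi.single j (1:ℝ) : Fin d → ℝ) := by
    funext i
    conv_lhs => rw [← Finset.univ_sum_single (v i)]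
    exact Finset.sum_congr rfl fun j _ => single_eq_smul j (v i j)
  conv_lhs => rw [h1]
  rw [MultilinearMap.map_sum]
  refine Finset.sum_congr rfl fun f _ => ?_
  rw [MultilinearMap.map_smul_univ]
  rfl

lemma expansion (x : T d n) : ∑ f : Fin n → Fin d, cf f x • bv d f = x := by
  classical
  have key : (∑ f : Fin n → Fin d, (cf f).smulRight (bv d f))
      = LinearMap.id (R := ℝ) (M := T d n) := by
    refine PiTensorProduct.ext (MultilinearMap.ext fun v => ?_)
    simp only [LinearMap.compMultilinearMap_apply, LinearMap.sum_apply, LinearMap.smulRight_apply,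
      LinearMap.id_apply, cf_tprod]
    exact (tprod_eq_sum v).symm
  have h2 := LinearMap.congr_fun key x
  simpa using h2

lemma ext_bv {N : Type*} [AddCommMonoid N] [Module ℝ N] {B₁ B₂ : T d n →ₗ[ℝ] N}
    (h : ∀ f, B₁ (bv d f) = B₂ (bv d f)) : B₁ = B₂ := by
  classical
  refine LinearMap.ext fun x => ?_
  rw [← expansion x]
  simp only [map_sum, _root_.map_smul]
  exact Finset.sum_congr rfl fun f _ => by rw [h f]

lemma eq_of_cf_eq {x y : T d n} (h : ∀ f, cf f x = cf f y) : x = y := by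
  rw [← expansion x, ← expansion y]
  exact Finset.sum_congr rfl fun f _ => by rw [h f]



variable {n : ℕ} {ι : Type} [Fintype ι] [DecidableEq ι]

noncomputable def cnt (h : Fin n → ι) : ι →₀ ℕ := ∑ i, Finsupp.single (h i) 1

lemma cnt_apply (h : Fin n → ι) (x : ι) :
    cnt h x = (Finset.univ.filter (fun i => h i = x)).card := by
  classical
  rw [cnt, Finset.sum_apply', Finset.card_filter]
  exact Finset.sum_congr rfl fun i _ => by rw [Finsupp.single_apply]

lemma exists_comp_perm {h h' : Fin n → ι} (hm : cnt h = cnt h') :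
    ∃ σ : Equiv.Perm (Fin n), h = h' ∘ σ := by
  classical
  have hcard : ∀ x : ι, Fintype.card {i // h i = x} = Fintype.card {i // h' i = x} := by
    intro x
    rw [Fintype.card_subtype, Fintype.card_subtype, ← cnt_apply, ← cnt_apply, hm]
  let w : ∀ x : ι, {i // h i = x} ≃ {i // h' i = x} := fun x => Fintype.equivOfCardEq (hcard x)
  refine ⟨(Equiv.sigmaFiberEquiv h).symm.trans
    ((Equiv.sigmaCongrRight w).trans (Equiv.sigmaFiberEquiv h')), ?_⟩
  funext i
  have h1 : (Equiv.sigmaFiberEquiv h).symm i = ⟨h i, ⟨i, rfl⟩⟩ := rfl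
  simp only [Function.comp_apply, Equiv.trans_apply, h1, Equiv.sigmaCongrRight_apply]
  exact ((w (h i)) ⟨i, rfl⟩).2.symm

lemma prod_pow_cnt (a : ι → ℝ) (h : Fin n → ι) :
    ((cnt h).prod fun x e => a x ^ e) = ∏ i, a (h i) := by
  rw [cnt, ← Finsupp.prod_finset_sum_index (by simp) (fun x b c => pow_add (a x) b c)]
  exact Finset.prod_congr rfl fun i _ => by
    rw [Finsupp.prod_single_index (by simp), pow_one]

lemma polarization (c : (Fin n → ι) → ℝ)
    (hc : ∀ (σ : Equiv.Perm (Fin n)) (h : Fin n → ι), c (h ∘ σ) = c h) :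
    c ∈ Submodule.span ℝ {q : (Fin n → ι) → ℝ | ∃ a : ι → ℝ, q = fun h => ∏ i, a (h i)} := by
  classical
  by_contra hnot
  obtain ⟨φ, hφ1, hφ2⟩ := Submodule.exists_dual_map_eq_bot_of_notMem hnot inferInstance
  set δ : (Fin n → ι) → ((Fin n → ι) → ℝ) := fun h => Pi.single h 1 with hδ
  set Pp : MvPolynomial ι ℝ :=
    ∑ h : Fin n → ι, (φ (δ h)) • MvPolynomial.monomial (cnt h) 1 with hPp
  have hsum : ∀ q : (Fin n → ι) → ℝ, q = ∑ h, q h • δ h := by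
    intro q
    conv_lhs => rw [← Finset.univ_sum_single q]
    refine Finset.sum_congr rfl fun h _ => ?_
    funext h'
    simp [hδ, Pi.single_apply, mul_ite]
  have hφsum : ∀ q : (Fin n → ι) → ℝ, φ q = ∑ h, q h * φ (δ h) := by
    intro q
    conv_lhs => rw [hsum q]
    rw [map_sum]
    exact Finset.sum_congr rfl fun h _ => by rw [_root_.map_smul]; rfl
  have heval : ∀ a : ι → ℝ, MvPolynomial.eval a Pp = 0 := by
    intro a
    have hmem : (fun h : Fin n → ι => ∏ i, a (h i)) ∈
        Submodule.span ℝ {q : (Fin n → ι) → ℝ | ∃ a : ι → ℝ, q = fun h => ∏ i, a (h i)} :=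
      Submodule.subset_span ⟨a, rfl⟩
    have h0 : φ (fun h : Fin n → ι => ∏ i, a (h i)) = 0 := by
      have := Submodule.mem_map_of_mem (f := φ) hmem
      rw [hφ2] at this
      simpa using this
    rw [hPp, map_sum, ← h0, hφsum]
    refine Finset.sum_congr rfl fun h _ => ?_
    rw [MvPolynomial.smul_eval, MvPolynomial.eval_monomial, prod_pow_cnt, one_mul, mul_comm]
  have hP0 : Pp = 0 := MvPolynomial.funext (fun x => by rw [heval x, map_zero])
  have hcoeff : ∀ m : ι →₀ ℕ,
      ∑ h ∈ Finset.univ.filter (fun h : Fin n → ι => cnt h = m), φ (δ h) = 0 := by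
    intro m
    have h1 := congrArg (MvPolynomial.coeff m) hP0
    rw [hPp] at h1
    rw [MvPolynomial.coeff_sum] at h1
    simp only [MvPolynomial.coeff_smul, MvPolynomial.coeff_monomial, MvPolynomial.coeff_zero,
      smul_eq_mul, mul_ite, mul_one, mul_zero] at h1
    rw [Finset.sum_filter]
    exact h1
  have hfinal : φ c = 0 := by
    rw [hφsum c]
    rw [← Finset.sum_fiberwise_of_maps_to
      (g := cnt) (t := Finset.univ.image cnt)
      (fun x _ => Finset.mem_image_of_mem _ (Finset.mem_univ x))
      (fun h => c h * φ (δ h))]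
    refine Finset.sum_eq_zero fun m hmm => ?_
    obtain ⟨h₀, _, hh₀⟩ := Finset.mem_image.mp hmm
    have hconst : ∀ h ∈ Finset.univ.filter (fun h : Fin n → ι => cnt h = m),
        c h * φ (δ h) = c h₀ * φ (δ h) := by
      intro h hh
      obtain ⟨σ, hσ⟩ := exists_comp_perm ((Finset.mem_filter.mp hh).2.trans hh₀.symm)
      rw [hσ, hc σ h₀]
    rw [Finset.sum_congr rfl hconst, ← Finset.mul_sum, hcoeff m, mul_zero]
  exact hφ1 hfinal


/-- tensor power of a matrix -/
noncomputable def Ma (a : Matrix (Fin d) (Fin d) ℝ) : T d n →ₗ[ℝ] T d n :=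
  PiTensorProduct.map (fun _ => a.mulVecLin)

@[simp] lemma Ma_tprod (a : Matrix (Fin d) (Fin d) ℝ) (v : Fin n → (Fin d → ℝ)) :
    Ma a (PiTensorProduct.tprod ℝ v) = PiTensorProduct.tprod ℝ (fun i => a.mulVec (v i)) := by
  simp [Ma, PiTensorProduct.map_tprod]

lemma cf_Ma_bv (a : Matrix (Fin d) (Fin d) ℝ) (f g : Fin n → Fin d) :
    cf f (Ma a (bv d g)) = ∏ i, a (f i) (g i) := by
  rw [bv, Ma_tprod, cf_tprod]
  refine Finset.prod_congr rfl fun i _ => ?_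
  rw [Matrix.mulVec_single]
  simp

/-- pairs to functions -/
def fh (h : Fin n → Fin d × Fin d) : Fin n → Fin d := fun i => (h i).1
def gh (h : Fin n → Fin d × Fin d) : Fin n → Fin d := fun i => (h i).2

/-- build an endomorphism from matrix entries indexed by pair-tuples -/
noncomputable def matrixify (γ : (Fin n → Fin d × Fin d) → ℝ) : T d n →ₗ[ℝ] T d n :=
  ∑ h : Fin n → Fin d × Fin d, γ h • ((cf (gh h)).smulRight (bv d (fh h)))

lemma cf_matrixify_bv (γ : (Fin n → Fin d × Fin d) → ℝ) (f g : Fin n → Fin d) :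
    cf f (matrixify γ (bv d g)) = γ (fun i => (f i, g i)) := by
  classical
  rw [matrixify]
  simp only [LinearMap.sum_apply, LinearMap.smul_apply, LinearMap.smulRight_apply, map_sum,
    LinearMap.map_smul]
  rw [Finset.sum_eq_single (fun i => (f i, g i))]
  · have h1 : gh (fun i => (f i, g i)) = g := rfl
    have h2 : fh (fun i => (f i, g i)) = f := rfl
    rw [h1, h2]
    simp [cf_bv]
  · intro h _ hne
    by_cases h1 : g = gh h
    · by_cases h2 : fh h = f
      · exfalso
        apply hne
        funext i
        have e1 := congrFun h1 i
        have e2 := congrFun h2 i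
        simp only [gh, fh] at e1 e2
        ext
        · exact e2.symm ▸ rfl
        · exact e1 ▸ rfl
      · simp [cf_bv, if_neg h2]
    · simp [cf_bv, if_neg h1]
  · intro hu; exact absurd (Finset.mem_univ _) hu

lemma matrixify_prod_eq_Ma (a : Fin d × Fin d → ℝ) :
    matrixify (d := d) (n := n) (fun h => ∏ i, a (h i)) = Ma (Matrix.of fun p q => a (p, q)) := by
  refine ext_bv fun g => ?_
  refine eq_of_cf_eq fun f => ?_
  rw [cf_matrixify_bv, cf_Ma_bv]
  rfl

lemma matrixify_entries (B : T d n →ₗ[ℝ] T d n) :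
    matrixify (fun h => cf (fh h) (B (bv d (gh h)))) = B := by
  refine ext_bv fun g => ?_
  refine eq_of_cf_eq fun f => ?_
  rw [cf_matrixify_bv]
  rfl

lemma bv_comp_perm (g : Fin n → Fin d) (σ : Equiv.Perm (Fin n)) :
    P d σ (bv d g) = bv d (g ∘ σ) := by
  rw [bv, P_tprod]; rfl

lemma cf_comp_perm (f : Fin n → Fin d) (σ : Equiv.Perm (Fin n)) :
    (cf (f ∘ σ)).comp (P d σ) = cf f := by
  refine ext_bv fun g => ?_
  simp only [LinearMap.comp_apply, bv_comp_perm, cf_bv]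
  congr 1
  simp only [eq_iff_iff]
  constructor
  · intro hgf
    funext i
    have := congrFun hgf (σ.symm i)
    simpa using this
  · intro hgf; rw [hgf]

noncomputable def matrixifyL : ((Fin n → Fin d × Fin d) → ℝ) →ₗ[ℝ] (T d n →ₗ[ℝ] T d n) :=
  ∑ h : Fin n → Fin d × Fin d,
    (LinearMap.proj h).smulRight ((cf (gh h)).smulRight (bv d (fh h)))

lemma matrixifyL_apply (γ : (Fin n → Fin d × Fin d) → ℝ) : matrixifyL γ = matrixify γ := by
  rw [matrixifyL, matrixify]
  simp [LinearMap.sum_apply]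

/-- Anything commuting with all permutation operators is in the span of matrix tensor powers. -/
lemma commutant_perm_mem_span (B : T d n →ₗ[ℝ] T d n)
    (hB : ∀ (σ : Equiv.Perm (Fin n)) (x : T d n), P d σ (B x) = B (P d σ x)) :
    B ∈ Submodule.span ℝ (Set.range (Ma (d := d) (n := n))) := by
  classical
  set c : (Fin n → Fin d × Fin d) → ℝ := fun h => cf (fh h) (B (bv d (gh h))) with hc
  have hsym : ∀ (σ : Equiv.Perm (Fin n)) (h : Fin n → Fin d × Fin d), c (h ∘ σ) = c h := by
    intro σ h
    have h1 : fh (h ∘ σ) = fh h ∘ σ := rfl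
    have h2 : gh (h ∘ σ) = gh h ∘ σ := rfl
    rw [hc]
    simp only [h1, h2]
    rw [← bv_comp_perm, ← hB σ, ← LinearMap.comp_apply (cf (fh h ∘ σ)), cf_comp_perm]
  have hspan := polarization (ι := Fin d × Fin d) c hsym
  have hmem : matrixify c ∈ Submodule.span ℝ (Set.range (Ma (d := d) (n := n))) := by
    have hmap : matrixifyL c ∈ Submodule.map (matrixifyL (d := d) (n := n))
        (Submodule.span ℝ {q : (Fin n → Fin d × Fin d) → ℝ |
          ∃ a : Fin d × Fin d → ℝ, q = fun h => ∏ i, a (h i)}) :=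
      Submodule.mem_map_of_mem hspan
    rw [matrixifyL_apply] at hmap
    rw [Submodule.map_span] at hmap
    refine Submodule.span_mono ?_ hmap
    rintro - ⟨q, ⟨a, rfl⟩, rfl⟩
    rw [Set.mem_range]
    exact ⟨Matrix.of fun p q => a (p, q), by rw [matrixifyL_apply, matrixify_prod_eq_Ma a]⟩
  rw [hc, matrixify_entries B] at hmem
  exact hmem


open Polynomial in
/-- The set of `t` such that `a + t • 1` is invertible is cofinite. -/
lemma unit_cofinite (a : Matrix (Fin d) (Fin d) ℝ) :
    {t : ℝ | ¬ IsUnit (a + t • 1)}.Finite := by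
  classical
  have hsub : {t : ℝ | ¬ IsUnit (a + t • 1)} ⊆
      (fun t : ℝ => -t) ⁻¹' (Module.End.HasEigenvalue a.mulVecLin) := by
    intro t ht
    simp only [Set.mem_setOf_eq] at ht
    have hdet : (a + t • 1).det = 0 := by
      by_contra hd
      exact ht ((Matrix.isUnit_iff_isUnit_det _).mpr (isUnit_iff_ne_zero.mpr hd))
    obtain ⟨v, hv0, hv⟩ := (Matrix.exists_mulVec_eq_zero_iff).mpr hdet
    have heig : a.mulVecLin v = (-t) • v := by
      have h1 : a.mulVec v + t • v = 0 := by
        rw [← hv, Matrix.add_mulVec, Matrix.smul_mulVec, Matrix.one_mulVec]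
      have := eq_neg_of_add_eq_zero_left h1
      rw [Matrix.mulVecLin_apply, this, neg_smul]
    exact Module.End.hasEigenvalue_of_hasEigenvector ⟨Module.End.mem_eigenspace_iff.mpr heig, hv0⟩
  exact (Module.End.finite_hasEigenvalue a.mulVecLin).preimage
    (Function.Injective.injOn neg_injective) |>.subset hsub

/-- piecewise tensor operator -/
noncomputable def Ds (a : Matrix (Fin d) (Fin d) ℝ) (s : Finset (Fin n)) : T d n →ₗ[ℝ] T d n :=
  PiTensorProduct.map (fun i => if i ∈ s then a.mulVecLin else LinearMap.id)

lemma Ds_univ (a : Matrix (Fin d) (Fin d) ℝ) : Ds (n := n) a Finset.univ = Ma a := by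
  rw [Ds, Ma]
  congr 1
  funext i
  rw [if_pos (Finset.mem_univ i)]

lemma Ma_add_smul_one (a : Matrix (Fin d) (Fin d) ℝ) (t : ℝ) :
    Ma (n := n) (a + t • 1) = ∑ s : Finset (Fin n), t ^ (n - s.card) • Ds a s := by
  classical
  refine ext_bv fun g => ?_
  rw [bv, Ma_tprod]
  simp only [LinearMap.sum_apply, LinearMap.smul_apply]
  have hsplit : (fun i => (a + t • 1).mulVec (Pi.single (g i) 1)) =
      (fun i => a.mulVec (Pi.single (g i) 1)) +
        (fun i => t • (Pi.single (g i) (1:ℝ) : Fin d → ℝ)) := by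
    funext i
    rw [Matrix.add_mulVec, Matrix.smul_mulVec, Matrix.one_mulVec]
    rfl
  rw [hsplit, MultilinearMap.map_add_univ]
  refine Finset.sum_congr rfl fun s _ => ?_
  have hu : Ds a s (PiTensorProduct.tprod ℝ (fun i => (Pi.single (g i) (1:ℝ) : Fin d → ℝ)))
      = PiTensorProduct.tprod ℝ
      (s.piecewise (fun i => a.mulVec (Pi.single (g i) 1)) (fun i => Pi.single (g i) 1)) := by
    rw [Ds, PiTensorProduct.map_tprod]
    congr 1
    funext i
    by_cases hi : i ∈ s <;> simp [hi, Finset.piecewise]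
  rw [hu]
  have key : s.piecewise (fun i => a.mulVec (Pi.single (g i) 1))
        (fun i => t • (Pi.single (g i) (1:ℝ) : Fin d → ℝ))
      = sᶜ.piecewise (fun i => t •
          (s.piecewise (fun i => a.mulVec (Pi.single (g i) 1)) (fun i => Pi.single (g i) 1)) i)
          (s.piecewise (fun i => a.mulVec (Pi.single (g i) 1)) (fun i => Pi.single (g i) 1)) := by
    funext i
    by_cases hi : i ∈ s <;> simp [Finset.piecewise, hi]
  rw [key, MultilinearMap.map_piecewise_smul, Finset.prod_const, Finset.card_compl,
    Fintype.card_fin]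

/-- Φ commutes with Ma a for every matrix a. -/
lemma commute_Ma
    (Φ : T d n →ₗ[ℝ] T d n)
    (hΦ : ∀ (A : GL (Fin d) ℝ) (x : T d n),
      Φ (PiTensorProduct.map (fun _ => Matrix.mulVecLin (A : Matrix (Fin d) (Fin d) ℝ)) x)
        = PiTensorProduct.map (fun _ => Matrix.mulVecLin (A : Matrix (Fin d) (Fin d) ℝ)) (Φ x))
    (a : Matrix (Fin d) (Fin d) ℝ) (x : T d n) : Φ (Ma a x) = Ma a (Φ x) := by
  classical
  have hGL : ∀ t : ℝ, IsUnit (a + t • 1) → ∀ y, Φ (Ma (a + t • 1) y) = Ma (a + t • 1) (Φ y) := by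
    intro t ht y
    have := hΦ ht.unit y
    simpa [Ma] using this
  -- coordinates as polynomials
  refine eq_of_cf_eq fun f => ?_
  set q : Polynomial ℝ := ∑ s : Finset (Fin n),
    Polynomial.C (cf f (Φ (Ds a s x)) - cf f (Ds a s (Φ x))) * Polynomial.X ^ (n - s.card) with hq
  have hqeval : ∀ t : ℝ, IsUnit (a + t • 1) → q.eval t = 0 := by
    intro t ht
    have h1 := hGL t ht x
    rw [Ma_add_smul_one] at h1
    simp only [LinearMap.sum_apply, LinearMap.smul_apply, map_sum, _root_.map_smul] at h1
    have h2 := congrArg (cf f) h1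
    simp only [map_sum, _root_.map_smul, smul_eq_mul] at h2
    rw [hq]
    simp only [Polynomial.eval_finset_sum, Polynomial.eval_mul, Polynomial.eval_C,
      Polynomial.eval_pow, Polynomial.eval_X]
    have h3 : ∑ s : Finset (Fin n), (cf f (Φ (Ds a s x)) - cf f (Ds a s (Φ x))) * t ^ (n - s.card)
        = ∑ s : Finset (Fin n), t ^ (n - s.card) * cf f (Φ (Ds a s x))
          - ∑ s : Finset (Fin n), t ^ (n - s.card) * cf f (Ds a s (Φ x)) := by
      rw [← Finset.sum_sub_distrib]
      exact Finset.sum_congr rfl fun s _ => by ring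
    rw [h3, h2, sub_self]
  have hq0 : q = 0 := by
    refine Polynomial.eq_zero_of_infinite_isRoot q ?_
    have hfin := unit_cofinite a
    have : {t : ℝ | ¬ IsUnit (a + t • 1)}ᶜ ⊆ {t : ℝ | q.IsRoot t} := by
      intro t ht
      simp only [Set.mem_compl_iff, Set.mem_setOf_eq, not_not] at ht
      exact hqeval t ht
    exact Set.Infinite.mono this (Set.Finite.infinite_compl hfin)
  have := congrArg (Polynomial.eval 0) hq0
  rw [hq] at this
  simp only [Polynomial.eval_finset_sum, Polynomial.eval_mul, Polynomial.eval_C,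
    Polynomial.eval_pow, Polynomial.eval_X, Polynomial.eval_zero] at this
  have hzero : ∀ s : Finset (Fin n), s ≠ Finset.univ →
      (cf f (Φ (Ds a s x)) - cf f (Ds a s (Φ x))) * (0:ℝ) ^ (n - s.card) = 0 := by
    intro s hs
    have hlt : s.card < n := by
      have hle : s.card ≤ n := by simpa using Finset.card_le_card (Finset.subset_univ s)
      rcases lt_or_eq_of_le hle with h | h
      · exact h
      · exact absurd (Finset.card_eq_iff_eq_univ s |>.mp (by simpa using h)) hs
    rw [zero_pow (Nat.sub_ne_zero_of_lt hlt), mul_zero]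
  rw [Finset.sum_eq_single Finset.univ (fun s _ hs => hzero s hs)
    (fun hu => absurd (Finset.mem_univ _) hu)] at this
  simp only [Finset.card_univ, Fintype.card_fin, Nat.sub_self, pow_zero, mul_one, Ds_univ] at this
  linarith [this]


section Assembly
variable (d n : ℕ)

/-- the permutation representation as a monoid hom into endomorphisms -/
noncomputable def Q : Equiv.Perm (Fin n) →* Module.End ℝ (T d n) where
  toFun σ := P d σ⁻¹
  map_one' := by
    refine ext_bv fun f => ?_
    show P d 1⁻¹ (bv d f) = bv d f
    rw [inv_one, bv_comp_perm]
    rfl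
  map_mul' σ τ := by
    refine ext_bv fun f => ?_
    show P d (σ * τ)⁻¹ (bv d f) = P d σ⁻¹ (P d τ⁻¹ (bv d f))
    rw [bv_comp_perm, bv_comp_perm, bv_comp_perm]
    rfl

/-- algebra map from the group algebra -/
noncomputable def ρ : MonoidAlgebra ℝ (Equiv.Perm (Fin n)) →ₐ[ℝ] Module.End ℝ (T d n) :=
  MonoidAlgebra.lift ℝ (Module.End ℝ (T d n)) (Equiv.Perm (Fin n)) (Q d n)

lemma ρ_single (σ : Equiv.Perm (Fin n)) : ρ d n (MonoidAlgebra.single σ 1) = P d σ⁻¹ := by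
  rw [ρ, MonoidAlgebra.lift_single]
  simp [Q]

theorem main_span (Φ : T d n →ₗ[ℝ] T d n)
    (hΦ : ∀ (A : GL (Fin d) ℝ) (x : T d n),
      Φ (PiTensorProduct.map (fun _ => Matrix.mulVecLin (A : Matrix (Fin d) (Fin d) ℝ)) x)
        = PiTensorProduct.map (fun _ => Matrix.mulVecLin (A : Matrix (Fin d) (Fin d) ℝ)) (Φ x)) :
    ∃ r : MonoidAlgebra ℝ (Equiv.Perm (Fin n)), Φ = ρ d n r := by
  classical
  set G := Equiv.Perm (Fin n)
  set R := MonoidAlgebra ℝ G with hR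
  letI : Module R (T d n) := Module.compHom _ (ρ d n).toRingHom
  have hsmul : ∀ (r : R) (x : T d n), r • x = ρ d n r x := fun _ _ => rfl
  haveI : NeZero ((Fintype.card G : ℝ)) := ⟨Nat.cast_ne_zero.mpr Fintype.card_ne_zero⟩
  -- Φ commutes with everything in the span of the Ma's
  have hΦspan : ∀ ψ : Module.End ℝ (T d n),
      ψ ∈ Submodule.span ℝ (Set.range (Ma (d := d) (n := n))) →
      ∀ x, Φ (ψ x) = ψ (Φ x) := by
    intro ψ hψ
    induction hψ using Submodule.span_induction with
    | mem ψ hm =>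
      obtain ⟨a, rfl⟩ := hm
      exact commute_Ma Φ hΦ a
    | zero => intro x; simp
    | add ψ₁ ψ₂ _ _ h1 h2 =>
      intro x
      simp [LinearMap.add_apply, h1 x, h2 x]
    | smul c ψ _ h =>
      intro x
      simp [LinearMap.smul_apply, _root_.map_smul, h x]
  -- the big module
  set β : (Fin n → Fin d) → T d n := fun f => bv d f with hβ
  set N : Submodule R ((Fin n → Fin d) → T d n) := Submodule.span R {β} with hN
  obtain ⟨N', hNc⟩ := ComplementedLattice.exists_isCompl N
  set π0 : ((Fin n → Fin d) → T d n) →ₗ[R] ((Fin n → Fin d) → T d n) :=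
    N.subtype.comp (N.projectionOnto N' hNc) with hπ0
  have hβN : β ∈ N := Submodule.mem_span_singleton_self β
  have hπβ : π0 β = β := by
    rw [hπ0]
    simp only [LinearMap.comp_apply]
    rw [show β = ((⟨β, hβN⟩ : N) : (Fin n → Fin d) → T d n) from rfl,
      Submodule.projectionOnto_apply_left hNc]
    rfl
  have hπrange : ∀ x, π0 x ∈ N := fun x => ((N.projectionOnto N' hNc) x).2
  -- ℝ-smul compatibility
  have hRsmul : ∀ (c : ℝ) (t : T d n), ((algebraMap ℝ R) c) • t = c • t := by
    intro c t
    rw [hsmul, AlgHom.commutes]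
    rfl
  have hRsmul' : ∀ (c : ℝ) (y : (Fin n → Fin d) → T d n),
      ((algebraMap ℝ R) c) • y = c • y := by
    intro c y
    funext j
    rw [Pi.smul_apply, Pi.smul_apply, hRsmul]
  -- the matrix entries of π0
  have hg : ∀ j k : Fin n → Fin d, ∃ g : Module.End ℝ (T d n),
      (∀ t, g t = π0 (Pi.single k t) j) ∧ (∀ (r : R) (t), g (ρ d n r t) = ρ d n r (g t)) := by
    intro j k
    refine ⟨{ toFun := fun t => π0 (Pi.single k t) j,
              map_add' := ?_, map_smul' := ?_ }, fun t => rfl, ?_⟩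
    · intro t t'
      show π0 (Pi.single k (t + t')) j = π0 (Pi.single k t) j + π0 (Pi.single k t') j
      rw [Pi.single_add, map_add]
      rfl
    · intro c t
      show π0 (Pi.single k (c • t)) j = c • π0 (Pi.single k t) j
      rw [Pi.single_smul, ← hRsmul' c, map_smul π0, hRsmul' c]
      rfl
    · intro r t
      show π0 (Pi.single k (ρ d n r t)) j = ρ d n r (π0 (Pi.single k t) j)
      rw [← hsmul r t, Pi.single_smul, map_smul π0, Pi.smul_apply, hsmul]
  -- commuting of Φ with π0, entrywise
  have hcomm : ∀ x : (Fin n → Fin d) → T d n, ∀ j,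
      Φ (π0 x j) = π0 (fun k => Φ (x k)) j := by
    intro x j
    choose g hg1 hg2 using hg
    have hgP : ∀ j k (σ : G) (t : T d n), P d σ (g j k t) = g j k (P d σ t) := by
      intro j k σ t
      have h1 : P d σ = ρ d n (MonoidAlgebra.single σ⁻¹ 1) := by rw [ρ_single, inv_inv]
      rw [h1, hg2]
    have hΦg : ∀ j k t, Φ (g j k t) = g j k (Φ t) := by
      intro j k t
      exact hΦspan (g j k) (commutant_perm_mem_span (g j k) (fun σ x => hgP j k σ x)) t
    have hdecomp : ∀ y : (Fin n → Fin d) → T d n, π0 y j = ∑ k, g j k (y k) := by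
      intro y
      conv_lhs => rw [← Finset.univ_sum_single y]
      rw [map_sum]
      rw [Finset.sum_apply]
      exact Finset.sum_congr rfl fun k _ => (hg1 j k (y k)).symm
    rw [hdecomp x, map_sum, hdecomp (fun k => Φ (x k))]
    exact Finset.sum_congr rfl fun k _ => hΦg j k (x k)
  -- conclude
  have hΦβ : (fun f => Φ (β f)) ∈ N := by
    have h1 : (fun f => Φ (β f)) = π0 (fun f => Φ (β f)) := by
      funext j
      rw [← hcomm β j, hπβ]
    rw [h1]
    exact hπrange _
  rw [hN, Submodule.mem_span_singleton] at hΦβ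
  obtain ⟨r, hr⟩ := hΦβ
  refine ⟨r, ext_bv fun f => ?_⟩
  have := congrFun hr f
  rw [Pi.smul_apply, hsmul] at this
  exact this.symm

end Assembly

end InvTensor

/-- Invariant tensor theorem: every `GL(d,ℝ)`-equivariant linear endomorphism of
`(ℝ^d)^{⊗n}` is a linear combination of the permutation maps
`δ(σ) : v₁⊗⋯⊗v_n ↦ v_{σ(1)}⊗⋯⊗v_{σ(n)}`; moreover, if `d ≥ n`, the permutation maps
are linearly independent (a vanishing linear combination has all coefficients zero). -/
theorem invariant_tensor_theorem (d n : ℕ)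
    (Φ : (⨂[ℝ] _ : Fin n, (Fin d → ℝ)) →ₗ[ℝ] ⨂[ℝ] _ : Fin n, (Fin d → ℝ))
    (hΦ : ∀ (A : GL (Fin d) ℝ) (x : ⨂[ℝ] _ : Fin n, (Fin d → ℝ)),
      Φ (PiTensorProduct.map (fun _ => Matrix.mulVecLin (A : Matrix (Fin d) (Fin d) ℝ)) x)
        = PiTensorProduct.map (fun _ => Matrix.mulVecLin (A : Matrix (Fin d) (Fin d) ℝ)) (Φ x)) :
    (∃ c : Equiv.Perm (Fin n) → ℝ, ∀ v : Fin n → (Fin d → ℝ),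
        Φ (PiTensorProduct.tprod ℝ v)
          = ∑ σ : Equiv.Perm (Fin n), c σ • PiTensorProduct.tprod ℝ (fun i => v (σ i))) ∧
      (d ≥ n → ∀ c : Equiv.Perm (Fin n) → ℝ,
        (∀ v : Fin n → (Fin d → ℝ),
          (∑ σ : Equiv.Perm (Fin n), c σ • PiTensorProduct.tprod ℝ (fun i => v (σ i)))
            = (0 : ⨂[ℝ] _ : Fin n, (Fin d → ℝ))) → c = 0) := by
  classical
  constructor
  · obtain ⟨r, hr⟩ := InvTensor.main_span d n Φ hΦ
    refine ⟨fun σ => r.coeff σ⁻¹, fun v => ?_⟩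
    rw [hr]
    have hρ : InvTensor.ρ d n r = ∑ σ : Equiv.Perm (Fin n), r.coeff σ • (InvTensor.Q d n σ) := by
      rw [InvTensor.ρ, MonoidAlgebra.lift_apply]
      exact Finsupp.sum_fintype _ _ (fun σ => by rw [zero_smul])
    rw [hρ, LinearMap.sum_apply]
    have hterm : ∀ σ : Equiv.Perm (Fin n),
        (r.coeff σ • InvTensor.Q d n σ) (PiTensorProduct.tprod ℝ v)
          = r.coeff σ • PiTensorProduct.tprod ℝ (fun i => v (σ⁻¹ i)) := by
      intro σ
      rw [LinearMap.smul_apply]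
      congr 1
      show InvTensor.P d σ⁻¹ (PiTensorProduct.tprod ℝ v) = _
      rw [InvTensor.P_tprod]
    rw [Finset.sum_congr rfl (fun σ _ => hterm σ)]
    exact Fintype.sum_equiv (Equiv.inv (Equiv.Perm (Fin n)))
      (fun σ => r.coeff σ • PiTensorProduct.tprod ℝ (fun i => v (σ⁻¹ i)))
      (fun σ => r.coeff σ⁻¹ • PiTensorProduct.tprod ℝ (fun i => v (σ i)))
      (fun σ => by simp)
  · intro hd c hc
    funext σ₀
    rw [Pi.zero_apply]
    set emb : Fin n → Fin d := fun i => Fin.castLE hd i with hemb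
    have hembinj : Function.Injective emb := fun i j hij => by
      apply Fin.val_injective
      have := congrArg Fin.val hij
      simpa [hemb] using this
    have h := hc (fun i => (Pi.single (emb i) 1 : Fin d → ℝ))
    have h2 := congrArg (InvTensor.cf (fun i => emb (σ₀ i))) h
    rw [map_sum, map_zero] at h2
    have h3 : ∀ σ : Equiv.Perm (Fin n),
        InvTensor.cf (fun i => emb (σ₀ i)) (c σ • PiTensorProduct.tprod ℝ
          (fun i => (Pi.single (emb (σ i)) 1 : Fin d → ℝ)))
        = c σ * (if (fun i => emb (σ i)) = (fun i => emb (σ₀ i)) then 1 else 0) := by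
      intro σ
      rw [_root_.map_smul]
      rw [show PiTensorProduct.tprod ℝ (fun i => (Pi.single (emb (σ i)) 1 : Fin d → ℝ))
        = InvTensor.bv d (fun i => emb (σ i)) from rfl, InvTensor.cf_bv]
      rfl
    rw [Finset.sum_congr rfl (fun σ _ => h3 σ)] at h2
    rw [Finset.sum_eq_single σ₀] at h2
    · rw [if_pos rfl, mul_one] at h2
      exact h2
    · intro σ _ hσ
      rw [if_neg, mul_zero]
      intro heq
      apply hσ
      refine Equiv.ext fun i => ?_
      exact hembinj (congrFun heq i)
    · intro hu; exact absurd (Finset.mem_univ _) hu
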